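/- Let A be an m×n real matrix and let 1 ≤ k ≤ n. Suppose that for every nonzero w ∈ ℝⁿ with Aw = 0 and every subset K ⊆ {1,…,n} with |K| = k one has ‖w_K‖₁ < ‖w_K̄‖₁. Then every x ∈ ℝⁿ with at most k nonzero entries is the unique minimizer of ‖z‖₁ over all z ∈ ℝⁿ with Az = Ax; that is, every ℓ1 minimizer x̂ for (A, x) equals x. -/
import Mathlib


/-- The ℓ1 norm of a vector in ℝⁿ. -/
noncomputable def l1 {n : ℕ} (x : Fin n → ℝ) : ℝ := ∑ i, |x i|

/-- The restriction of a vector to the coordinates in `K` (zero outside `K`). -/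
def restr {n : ℕ} (K : Finset (Fin n)) (x : Fin n → ℝ) : Fin n → ℝ :=
  fun i => if i ∈ K then x i else 0

lemma l1_split {n : ℕ} (K : Finset (Fin n)) (x : Fin n → ℝ) :
    l1 x = l1 (restr K x) + l1 (restr Kᶜ x) := by
  unfold l1 restr
  rw [← Finset.sum_add_distrib]
  refine Finset.sum_congr rfl fun i _ => ?_
  by_cases h : i ∈ K <;> simp [h]

lemma l1_sub_le {n : ℕ} (a b : Fin n → ℝ) : l1 a - l1 b ≤ l1 (a - b) := by
  unfold l1
  rw [← Finset.sum_sub_distrib]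
  refine Finset.sum_le_sum fun i _ => ?_
  simpa using abs_sub_abs_le_abs_sub (a i) (b i)

lemma restr_sub {n : ℕ} (K : Finset (Fin n)) (a b : Fin n → ℝ) :
    restr K (a - b) = restr K a - restr K b := by
  funext i; simp only [restr, Pi.sub_apply]; split <;> simp

theorem stmt_2 {m n : ℕ} (A : Matrix (Fin m) (Fin n) ℝ)
    (k : ℕ) (hk1 : 1 ≤ k) (hkn : k ≤ n)
    (hnull : ∀ w : Fin n → ℝ, A.mulVec w = 0 → w ≠ 0 →
      ∀ K : Finset (Fin n), K.card = k →
        l1 (restr K w) < l1 (restr Kᶜ w)) :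
    ∀ x : Fin n → ℝ,
      -- `x` has at most `k` nonzero entries
      (∃ K : Finset (Fin n), K.card ≤ k ∧ ∀ i, i ∉ K → x i = 0) →
      ∀ xh : Fin n → ℝ, A.mulVec xh = A.mulVec x →
        (∀ z : Fin n → ℝ, A.mulVec z = A.mulVec x → l1 xh ≤ l1 z) →
        xh = x := by
  intro x ⟨K0, hK0card, hK0⟩ xh hAxh hmin
  by_contra hne
  -- enlarge K0 to a set of cardinality exactly k
  obtain ⟨K, hK0K, -, hKcard⟩ :=
    Finset.exists_subsuperset_card_eq (Finset.subset_univ K0) hK0card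
      (by simpa using hkn)
  have hxK : ∀ i, i ∉ K → x i = 0 := fun i hi => hK0 i (fun h => hi (hK0K h))
  set w : Fin n → ℝ := xh - x with hw
  have hAw : A.mulVec w = 0 := by
    rw [hw, Matrix.mulVec_sub, hAxh, sub_self]
  have hwne : w ≠ 0 := fun h => hne (sub_eq_zero.mp h)
  have hlt := hnull w hAw hwne K hKcard
  -- restr Kᶜ xh = restr Kᶜ w
  have h1 : restr Kᶜ xh = restr Kᶜ w := by
    funext i; simp only [restr, hw, Pi.sub_apply]
    split
    · rename_i h; rw [hxK i (by simpa using h)]; ring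
    · rfl
  -- restr K x = 0 outside... l1 x = l1 (restr K x)
  have h2 : l1 x = l1 (restr K x) := by
    rw [l1_split K x]
    have : restr Kᶜ x = 0 := by
      funext i; simp only [restr]
      split
      · rename_i h; exact hxK i (by simpa using h)
      · rfl
    simp [this, l1]
  have h3 : l1 (restr K x) - l1 (restr K w) ≤ l1 (restr K xh) := by
    have htri := l1_sub_le (restr K x) (restr K xh)
    rw [← restr_sub] at htri
    have hneg : restr K (x - xh) = -(restr K w) := by
      rw [hw, restr_sub]; funext i; simp only [restr, Pi.sub_apply, Pi.neg_apply]; split <;> ring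
    rw [hneg] at htri
    have hl1neg : l1 (-(restr K w)) = l1 (restr K w) := by simp [l1]
    rw [hl1neg] at htri
    linarith
  have h4 : l1 xh ≤ l1 x := hmin x rfl
  rw [l1_split K xh, h1] at h4
  rw [h2] at h4
  linarith
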